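/- Under the assumptions of the previous construction (γ_A a probability density on ℝ^{Nd} with all one-body marginals equal to μ_A, μ_B a probability density on ℝ^d), the operator P satisfies the L¹ stability estimate ‖γ_A − Pγ_A‖_{L¹(ℝ^{Nd})} ≤ (2^{N−1} + (N−1)/2)‖μ_A − μ_B‖_{L¹(ℝ^d)}. -/

import Mathlib

open MeasureTheory
open scoped ENNReal

lemma aux_one_sub_prod_le {ι : Type*} (s : Finset ι) (b : ι → ℝ≥0∞)
    (hb : ∀ i ∈ s, b i ≤ 1) :
    1 - ∏ i ∈ s, b i ≤ ∑ i ∈ s, (1 - b i) := by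
  classical
  induction s using Finset.induction with
  | empty => simp
  | @insert j s hjs ih =>
    have hbj : b j ≤ 1 := hb j (Finset.mem_insert_self _ _)
    have hb' : ∀ i ∈ s, b i ≤ 1 := fun i hi => hb i (Finset.mem_insert_of_mem hi)
    have hP : ∏ i ∈ s, b i ≤ 1 := Finset.prod_le_one (fun i _ => zero_le) hb'
    rw [Finset.prod_insert hjs, Finset.sum_insert hjs]
    have h1 : 1 - b j * ∏ i ∈ s, b i ≤ (1 - b j) + (b j - b j * ∏ i ∈ s, b i) :=
      tsub_le_tsub_add_tsub
    have h2 : b j - b j * ∏ i ∈ s, b i ≤ 1 - ∏ i ∈ s, b i := by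
      have : b j * (1 - ∏ i ∈ s, b i) = b j * 1 - b j * ∏ i ∈ s, b i :=
        ENNReal.mul_sub (fun _ _ => ne_top_of_le_ne_top ENNReal.one_ne_top hbj)
      calc b j - b j * ∏ i ∈ s, b i = b j * 1 - b j * ∏ i ∈ s, b i := by rw [mul_one]
        _ = b j * (1 - ∏ i ∈ s, b i) := this.symm
        _ ≤ 1 * (1 - ∏ i ∈ s, b i) := mul_le_mul_left hbj _
        _ = 1 - ∏ i ∈ s, b i := one_mul _
    exact h1.trans (add_le_add le_rfl (h2.trans (ih hb')))

lemma aux_ae_le_of_withDensity_le {α : Type*} [MeasurableSpace α] {μ : Measure α}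
    {f g : α → ℝ≥0∞} (hf : Measurable f) (hg : Measurable g)
    (hfin : ∫⁻ x, f x ∂μ ≠ ∞)
    (h : μ.withDensity f ≤ μ.withDensity g) : f ≤ᵐ[μ] g := by
  have hs : MeasurableSet {x | g x < f x} := measurableSet_lt hg hf
  set s := {x | g x < f x} with hsdef
  have hfs : ∫⁻ x in s, f x ∂μ ≠ ∞ :=
    ne_top_of_le_ne_top hfin (setLIntegral_le_lintegral _ _)
  have hle : ∫⁻ x in s, f x ∂μ ≤ ∫⁻ x in s, g x ∂μ := by
    have h' := Measure.le_iff'.mp h s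
    rwa [withDensity_apply _ hs, withDensity_apply _ hs] at h'
  have hge : ∫⁻ x in s, g x ∂μ ≤ ∫⁻ x in s, f x ∂μ :=
    setLIntegral_mono hf (fun x hx => le_of_lt hx)
  have hgs : ∫⁻ x in s, g x ∂μ ≠ ∞ := ne_top_of_le_ne_top hfs hge
  have h0 : ∫⁻ x in s, (f x - g x) ∂μ = 0 := by
    rw [lintegral_sub hg hgs ((ae_restrict_mem hs).mono fun x hx => le_of_lt hx)]
    exact tsub_eq_zero_of_le hle
  have hz : (fun x => f x - g x) =ᵐ[μ.restrict s] 0 :=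
    (lintegral_eq_zero_iff (hf.sub hg)).mp h0
  have hμs : μ s = 0 := by
    have h1 : μ.restrict s {x | ¬ (f x - g x = 0)} = 0 := by
      simpa [Filter.EventuallyEq, ae_iff] using hz
    have h2 : {x | ¬ (f x - g x = 0)} = s := by
      ext x
      simp [hsdef, tsub_eq_zero_iff_le, not_le]
    rw [h2, Measure.restrict_apply_self] at h1
    exact h1
  refine ae_iff.mpr ?_
  have : {x | ¬ f x ≤ g x} = s := by ext x; simp [hsdef, not_le]
  rw [this]; exact hμs

lemma aux_measurable_pi {N : ℕ} {E : Type*} [MeasurableSpace E] (κ : E → Measure E)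
    (hκ : Measurable κ) (hfin : ∀ x, IsFiniteMeasure (κ x)) :
    Measurable fun x' : Fin N → E => Measure.pi fun i => κ (x' i) := by
  haveI := hfin
  have huniv : Measurable fun x' : Fin N → E =>
      Measure.pi (fun i => κ (x' i)) Set.univ := by
    have h : ∀ x' : Fin N → E,
        Measure.pi (fun i => κ (x' i)) Set.univ = ∏ i, κ (x' i) Set.univ :=
      fun x' => Measure.pi_univ _
    simp_rw [h]
    exact Finset.measurable_prod _ fun i _ =>
      (Measure.measurable_coe MeasurableSet.univ).comp (hκ.comp (measurable_pi_apply i))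
  apply Measure.measurable_of_measurable_coe
  intro t ht
  refine MeasurableSpace.induction_on_inter
    (C := fun t _ => Measurable fun x' : Fin N → E => Measure.pi (fun i => κ (x' i)) t)
    generateFrom_pi.symm isPiSystem_pi ?_ ?_ ?_ ?_ _ ht
  · simp only [measure_empty]; exact measurable_const
  · rintro _ ⟨s, hs, rfl⟩
    have h : ∀ x' : Fin N → E,
        Measure.pi (fun i => κ (x' i)) (Set.pi Set.univ s) = ∏ i, κ (x' i) (s i) :=
      fun x' => Measure.pi_pi _ _
    simp_rw [h]
    exact Finset.measurable_prod _ fun i _ =>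
      (Measure.measurable_coe (hs i (Set.mem_univ i))).comp (hκ.comp (measurable_pi_apply i))
  · intro u hu hmu
    have h : ∀ x' : Fin N → E, Measure.pi (fun i => κ (x' i)) uᶜ =
        Measure.pi (fun i => κ (x' i)) Set.univ - Measure.pi (fun i => κ (x' i)) u := by
      intro x'
      haveI : IsFiniteMeasure (Measure.pi fun i => κ (x' i)) := ⟨by
        rw [Measure.pi_univ]; exact ENNReal.prod_lt_top fun i _ => measure_lt_top _ _⟩
      rw [measure_compl hu (measure_ne_top _ _)]
    simp_rw [h]
    exact huniv.sub hmu
  · intro g hdis hgm hm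
    have h : ∀ x' : Fin N → E, Measure.pi (fun i => κ (x' i)) (⋃ n, g n) =
        ∑' n, Measure.pi (fun i => κ (x' i)) (g n) := fun x' => measure_iUnion hdis hgm
    simp_rw [h]
    exact Measurable.ennreal_tsum hm

lemma aux_integrable_of_lintegral {α : Type*} [MeasurableSpace α] {μ : Measure α} {f : α → ℝ}
    (hm : Measurable f) (h0 : 0 ≤ᵐ[μ] f) (hfin : ∫⁻ x, ENNReal.ofReal (f x) ∂μ ≠ ∞) :
    Integrable f μ := by
  refine ⟨hm.aestronglyMeasurable, ?_⟩
  rw [hasFiniteIntegral_iff_ofReal h0]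
  exact lt_of_le_of_ne le_top hfin

/-- The kernel `x' ↦ γ_{B,A}(·, x')/μ_A(x')`, where
`γ_{B,A}(x,x') = f(x)δ_x(x') + f_B(x) f_A(x')/∫f_B` with `f = min(μ_A,μ_B)`,
`f_A = (μ_A − f)₊`, `f_B = (μ_B − f)₊`. -/
noncomputable def coupleKernel (d : ℕ) (μA μB : (Fin d → ℝ) → ℝ) (x' : Fin d → ℝ) :
    Measure (Fin d → ℝ) :=
  ENNReal.ofReal (min (μA x') (μB x') / μA x') • Measure.dirac x' +
    volume.withDensity (fun x => ENNReal.ofReal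
      (max (μA x' - min (μA x') (μB x')) 0 /
          (μA x' * ∫ y, max (μB y - min (μA y) (μB y)) 0) *
        max (μB x - min (μA x) (μB x)) 0))

/-- The operator `P`: `Pγ_A(x_1,…,x_N) = ∫ ∏ᵢ (γ_{B,A}(x_i,x_i')/μ_A(x_i')) γ_A(x') dx'`. -/
noncomputable def smoothP (N d : ℕ) (μA μB : (Fin d → ℝ) → ℝ)
    (ν : Measure (Fin N → Fin d → ℝ)) : Measure (Fin N → Fin d → ℝ) :=
  ν.bind (fun x' => Measure.pi (fun i => coupleKernel d μA μB (x' i)))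

/-- L¹ stability: `‖γ_A − Pγ_A‖_{L¹(ℝ^{Nd})} ≤ (2^{N−1} + (N−1)/2) ‖μ_A − μ_B‖_{L¹(ℝ^d)}`,
where `ρP` denotes the density of `Pγ_A`. -/
theorem smoothP_L1_stability (N d : ℕ) (hN : 1 ≤ N)
    (γA : (Fin N → Fin d → ℝ) → ℝ) (μA μB : (Fin d → ℝ) → ℝ)
    (hγAm : Measurable γA) (hγA0 : ∀ x, 0 ≤ γA x) (hγA1 : ∫ x, γA x = 1)
    (hμAm : Measurable μA) (hμA0 : ∀ᵐ x, 0 < μA x)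
    (hμBm : Measurable μB) (hμB0 : ∀ x, 0 ≤ μB x) (hμB1 : ∫ x, μB x = 1)
    (hmarg : ∀ i : Fin N,
      (volume.withDensity (fun x => ENNReal.ofReal (γA x))).map (fun x => x i) =
        volume.withDensity (fun t => ENNReal.ofReal (μA t)))
    (ρP : (Fin N → Fin d → ℝ) → ℝ) (hρPm : Measurable ρP) (hρP0 : ∀ x, 0 ≤ ρP x)
    (hρP : smoothP N d μA μB (volume.withDensity (fun x => ENNReal.ofReal (γA x))) =
      volume.withDensity (fun x => ENNReal.ofReal (ρP x))) :
    ∫ x, |γA x - ρP x| ≤ (2 ^ (N - 1) + ((N : ℝ) - 1) / 2) * ∫ t, |μA t - μB t| := by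
  classical
  set γmeas := volume.withDensity (fun x => ENNReal.ofReal (γA x)) with hγmeas
  set fA : (Fin d → ℝ) → ℝ := fun t => max (μA t - min (μA t) (μB t)) 0 with hfA
  set fB : (Fin d → ℝ) → ℝ := fun t => max (μB t - min (μA t) (μB t)) 0 with hfB
  set s₀ : ℝ := ∫ y, fB y with hs₀def
  set a : (Fin d → ℝ) → ℝ := fun t => min (μA t) (μB t) / μA t with ha
  set c : (Fin d → ℝ) → ℝ := fun t => fA t / (μA t * s₀) with hc
  -- basic integrabilities
  have hγAint : Integrable γA (volume) := by
    by_contra h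
    rw [integral_undef h] at hγA1
    exact one_ne_zero hγA1.symm
  have hμBint : Integrable μB (volume) := by
    by_contra h
    rw [integral_undef h] at hμB1
    exact one_ne_zero hμB1.symm
  have hγuniv : ∫⁻ x, ENNReal.ofReal (γA x) = 1 := by
    rw [← ofReal_integral_eq_lintegral_ofReal hγAint (Filter.Eventually.of_forall hγA0), hγA1,
      ENNReal.ofReal_one]
  have hγmuniv : γmeas Set.univ = 1 := by
    rw [hγmeas, withDensity_apply _ MeasurableSet.univ, Measure.restrict_univ, hγuniv]
  have hμAlint : ∫⁻ t, ENNReal.ofReal (μA t) = 1 := by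
    have h := congrArg (fun m : Measure (Fin d → ℝ) => m Set.univ) (hmarg ⟨0, hN⟩)
    simp only [Measure.map_apply (measurable_pi_apply _) MeasurableSet.univ,
      Set.preimage_univ] at h
    have h2 : (volume.withDensity fun t => ENNReal.ofReal (μA t)) Set.univ
        = ∫⁻ t, ENNReal.ofReal (μA t) := by
      rw [withDensity_apply _ MeasurableSet.univ, Measure.restrict_univ]
    rw [h2] at h
    rw [← h]
    exact hγmuniv
  have hμAint : Integrable μA (volume) :=
    aux_integrable_of_lintegral hμAm (hμA0.mono fun x hx => hx.le)
      (by rw [hμAlint]; exact ENNReal.one_ne_top)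
  have hμA1 : ∫ t, μA t = 1 := by
    rw [integral_eq_lintegral_of_nonneg_ae (hμA0.mono fun x hx => hx.le)
      hμAm.aestronglyMeasurable, hμAlint, ENNReal.toReal_one]
  -- measurability of auxiliary functions
  have hfAm : Measurable fA := ((hμAm.sub (hμAm.min hμBm)).max measurable_const)
  have hfBm : Measurable fB := ((hμBm.sub (hμAm.min hμBm)).max measurable_const)
  have ham : Measurable a := (hμAm.min hμBm).div hμAm
  have hcm : Measurable c := hfAm.div ((hμAm.mul_const s₀))
  have hfA0 : ∀ t, 0 ≤ fA t := fun t => le_max_right _ _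
  have hfB0 : ∀ t, 0 ≤ fB t := fun t => le_max_right _ _
  have habs_int : Integrable (fun t => |μA t - μB t|) (volume) := (hμAint.sub hμBint).abs
  have hfA_le : ∀ t, fA t ≤ |μA t - μB t| := by
    intro t
    rcases le_total (μA t) (μB t) with h | h
    · simp [hfA, min_eq_left h]
    · simp only [hfA, min_eq_right h]
      rw [max_eq_left (sub_nonneg.mpr h), abs_of_nonneg (sub_nonneg.mpr h)]
  have hfB_le : ∀ t, fB t ≤ |μA t - μB t| := by
    intro t
    rcases le_total (μA t) (μB t) with h | h
    · simp only [hfB, min_eq_left h]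
      rw [max_eq_left (sub_nonneg.mpr h), abs_of_nonpos (sub_nonpos.mpr h)]
      ring_nf
      exact le_rfl
    · simp [hfB, min_eq_right h]
  have hfA_int : Integrable fA (volume) :=
    habs_int.mono' hfAm.aestronglyMeasurable
      (Filter.Eventually.of_forall fun t => by
        rw [Real.norm_eq_abs, abs_of_nonneg (hfA0 t)]; exact hfA_le t)
  have hfB_int : Integrable fB (volume) :=
    habs_int.mono' hfBm.aestronglyMeasurable
      (Filter.Eventually.of_forall fun t => by
        rw [Real.norm_eq_abs, abs_of_nonneg (hfB0 t)]; exact hfB_le t)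
  have hs₀0 : 0 ≤ s₀ := integral_nonneg hfB0
  have hmfB : ∫⁻ t, ENNReal.ofReal (fB t) = ENNReal.ofReal s₀ :=
    (ofReal_integral_eq_lintegral_ofReal hfB_int (Filter.Eventually.of_forall hfB0)).symm
  -- kernel representation
  have hK : ∀ x', coupleKernel d μA μB x' =
      ENNReal.ofReal (a x') • Measure.dirac x' +
        ENNReal.ofReal (c x') • volume.withDensity (fun x => ENNReal.ofReal (fB x)) := by
    intro x'
    rw [coupleKernel]
    congr 1
    rw [← withDensity_smul' _ _ ENNReal.ofReal_ne_top]
    congr 1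
    funext x
    show ENNReal.ofReal (c x' * fB x) = ENNReal.ofReal (c x') * ENNReal.ofReal (fB x)
    rcases le_or_gt 0 (c x') with h | h
    · exact ENNReal.ofReal_mul h
    · rw [ENNReal.ofReal_eq_zero.mpr (mul_nonpos_of_nonpos_of_nonneg h.le (hfB0 x)),
        ENNReal.ofReal_eq_zero.mpr h.le, zero_mul]
  have hκm : Measurable (coupleKernel d μA μB) := by
    apply Measure.measurable_of_measurable_coe
    intro t ht
    have : ∀ x', coupleKernel d μA μB x' t =
        ENNReal.ofReal (a x') * t.indicator 1 x' +
          ENNReal.ofReal (c x') * volume.withDensity (fun x => ENNReal.ofReal (fB x)) t := by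
      intro x'
      rw [hK x', Measure.add_apply, Measure.smul_apply, Measure.smul_apply, smul_eq_mul,
        smul_eq_mul, Measure.dirac_apply' _ ht]
    simp_rw [this]
    exact ((ham.ennreal_ofReal).mul (measurable_one.indicator ht)).add
      ((hcm.ennreal_ofReal).mul measurable_const)
  have hmuniv : (volume.withDensity (fun x => ENNReal.ofReal (fB x))) Set.univ
      = ENNReal.ofReal s₀ := by
    rw [withDensity_apply _ MeasurableSet.univ, Measure.restrict_univ, hmfB]
  have hκfin : ∀ x', IsFiniteMeasure (coupleKernel d μA μB x') := by
    intro x'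
    constructor
    rw [hK x', Measure.add_apply, Measure.smul_apply, Measure.smul_apply, smul_eq_mul,
      smul_eq_mul, hmuniv]
    exact ENNReal.add_lt_top.mpr ⟨ENNReal.mul_lt_top ENNReal.ofReal_lt_top (by simp),
      ENNReal.mul_lt_top ENNReal.ofReal_lt_top ENNReal.ofReal_lt_top⟩
  have hKm : Measurable (fun x' : Fin N → Fin d → ℝ =>
      Measure.pi fun i => coupleKernel d μA μB (x' i)) :=
    aux_measurable_pi _ hκm hκfin
  -- kernel mass bound
  have hmass : ∀ᵐ t : Fin d → ℝ, coupleKernel d μA μB t Set.univ ≤ 1 := by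
    filter_upwards [hμA0] with t ht
    rw [hK t, Measure.add_apply, Measure.smul_apply, Measure.smul_apply, smul_eq_mul,
      smul_eq_mul, hmuniv, Measure.dirac_apply_of_mem (Set.mem_univ t), mul_one]
    have hmin0 : 0 ≤ min (μA t) (μB t) := le_min ht.le (hμB0 t)
    have hminA : min (μA t) (μB t) ≤ μA t := min_le_left _ _
    have ha1 : a t ≤ 1 := (div_le_one ht).mpr hminA
    rcases eq_or_lt_of_le hs₀0 with h0 | h0
    · have hct : c t = 0 := by
        rw [hc]
        simp [← h0]
      rw [hct, ENNReal.ofReal_zero, zero_mul, add_zero]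
      exact ENNReal.ofReal_le_one.mpr ha1
    · have hc0 : 0 ≤ c t := div_nonneg (hfA0 t) (mul_nonneg ht.le hs₀0)
      rw [← ENNReal.ofReal_mul hc0]
      have hcs : c t * s₀ = fA t / μA t := by
        rw [hc]
        field_simp
      rw [hcs, ← ENNReal.ofReal_add (div_nonneg hmin0 ht.le) (div_nonneg (hfA0 t) ht.le)]
      have hfAt : fA t = μA t - min (μA t) (μB t) := max_eq_left (sub_nonneg.mpr hminA)
      have : a t + fA t / μA t = 1 := by
        rw [ha, hfAt, ← add_div]
        field_simp
        ring
      rw [this, ENNReal.ofReal_one]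
  -- smoothP total mass ≤ 1
  have hGmeas : MeasurableSet {t : Fin d → ℝ | coupleKernel d μA μB t Set.univ ≤ 1} :=
    measurableSet_le ((Measure.measurable_coe MeasurableSet.univ).comp hκm) measurable_const
  have hGc : volume {t : Fin d → ℝ | coupleKernel d μA μB t Set.univ ≤ 1}ᶜ = 0 := by
    rw [Set.compl_setOf]
    exact ae_iff.mp hmass
  have hcoordae : ∀ᵐ x' ∂γmeas, ∀ i : Fin N,
      coupleKernel d μA μB (x' i) Set.univ ≤ 1 := by
    rw [ae_all_iff]
    intro i
    have : γmeas ((fun x : Fin N → Fin d → ℝ => x i) ⁻¹'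
        {t : Fin d → ℝ | coupleKernel d μA μB t Set.univ ≤ 1}ᶜ) = 0 := by
      rw [← Measure.map_apply (measurable_pi_apply i) hGmeas.compl, hmarg i]
      exact (withDensity_absolutelyContinuous volume _) hGc
    exact this
  have hPuniv : smoothP N d μA μB γmeas Set.univ ≤ 1 := by
    rw [smoothP, Measure.bind_apply MeasurableSet.univ hKm.aemeasurable]
    calc ∫⁻ x', Measure.pi (fun i => coupleKernel d μA μB (x' i)) Set.univ ∂γmeas
        ≤ ∫⁻ _, 1 ∂γmeas := by
          refine lintegral_mono_ae (hcoordae.mono fun x' hx' => ?_)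
          haveI := fun i => hκfin (x' i)
          rw [Measure.pi_univ]
          exact Finset.prod_le_one' fun i _ => hx' i
      _ = 1 := by rw [lintegral_one, hγmuniv]
  -- ρP facts
  have hρlint : ∫⁻ x, ENNReal.ofReal (ρP x) ≤ 1 := by
    have : (volume.withDensity fun x => ENNReal.ofReal (ρP x)) Set.univ
        = ∫⁻ x, ENNReal.ofReal (ρP x) := by
      rw [withDensity_apply _ MeasurableSet.univ, Measure.restrict_univ]
    rw [← this, ← hρP]
    exact hPuniv
  have hρPint : Integrable ρP (volume) :=
    aux_integrable_of_lintegral hρPm (Filter.Eventually.of_forall hρP0)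
      (ne_top_of_le_ne_top ENNReal.one_ne_top hρlint)
  have hρP1 : ∫ x, ρP x ≤ 1 := by
    rw [integral_eq_lintegral_of_nonneg_ae (Filter.Eventually.of_forall hρP0)
      hρPm.aestronglyMeasurable]
    calc (∫⁻ x, ENNReal.ofReal (ρP x)).toReal ≤ (1 : ℝ≥0∞).toReal :=
        ENNReal.toReal_mono ENNReal.one_ne_top hρlint
      _ = 1 := ENNReal.toReal_one
  -- capped product density
  set capA : (Fin d → ℝ) → ℝ≥0∞ := fun t => min (ENNReal.ofReal (a t)) 1 with hcapA
  have hcapm : Measurable capA := ham.ennreal_ofReal.min measurable_const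
  have hcap1 : ∀ t, capA t ≤ 1 := fun t => min_le_right _ _
  set dd' : (Fin N → Fin d → ℝ) → ℝ≥0∞ :=
    fun x => ENNReal.ofReal (γA x) * ∏ i, capA (x i) with hdd'
  have hdd'm : Measurable dd' :=
    hγAm.ennreal_ofReal.mul
      (Finset.measurable_prod _ fun i _ => hcapm.comp (measurable_pi_apply i))
  have hddle : ∀ x, dd' x ≤ ENNReal.ofReal (γA x) := fun x => by
    calc dd' x ≤ ENNReal.ofReal (γA x) * 1 :=
        mul_le_mul_right (Finset.prod_le_one' fun i _ => hcap1 _) _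
      _ = ENNReal.ofReal (γA x) := mul_one _
  have hddfin : ∫⁻ x, dd' x ≠ ∞ := by
    refine ne_top_of_le_ne_top (by rw [hγuniv]; exact ENNReal.one_ne_top)
      (lintegral_mono fun x => hddle x)
  -- lower bound measure
  have hprodm : Measurable fun x : Fin N → Fin d → ℝ => ∏ i, capA (x i) := by
    exact Finset.measurable_prod _ fun i _ => hcapm.comp (measurable_pi_apply i)
  have hlow : volume.withDensity dd' ≤ smoothP N d μA μB γmeas := by
    refine Measure.le_iff.mpr fun t ht => ?_
    rw [smoothP, Measure.bind_apply ht hKm.aemeasurable]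
    have key : ∀ x' : Fin N → Fin d → ℝ,
        t.indicator (fun x'' => ∏ i, capA (x'' i)) x' ≤
          Measure.pi (fun i => coupleKernel d μA μB (x' i)) t := by
      intro x'
      by_cases hx : x' ∈ t
      · rw [Set.indicator_of_mem hx]
        haveI := fun i => hκfin (x' i)
        calc ∏ i, capA (x' i)
            ≤ ∏ i, coupleKernel d μA μB (x' i) {x' i} := by
              refine Finset.prod_le_prod' fun i _ => ?_
              rw [hK (x' i), Measure.add_apply, Measure.smul_apply, smul_eq_mul,
                Measure.dirac_apply_of_mem (Set.mem_singleton _), mul_one]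
              exact le_add_right (min_le_left _ _)
          _ = Measure.pi (fun i => coupleKernel d μA μB (x' i))
              (Set.pi Set.univ fun i => {x' i}) := (Measure.pi_pi _ _).symm
          _ ≤ Measure.pi (fun i => coupleKernel d μA μB (x' i)) t := by
              refine measure_mono ?_
              rw [Set.univ_pi_singleton]
              exact Set.singleton_subset_iff.mpr hx
      · rw [Set.indicator_of_notMem hx]
        exact zero_le
    calc volume.withDensity dd' t
        = ((volume.withDensity fun x => ENNReal.ofReal (γA x)).withDensity
            fun x => ∏ i, capA (x i)) t := by
          rw [← withDensity_mul _ hγAm.ennreal_ofReal hprodm]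
          rfl
      _ = ∫⁻ x' in t, (∏ i, capA (x' i)) ∂γmeas := by
          rw [withDensity_apply _ ht]
      _ = ∫⁻ x', t.indicator (fun x'' => ∏ i, capA (x'' i)) x' ∂γmeas := by
          rw [lintegral_indicator ht]
      _ ≤ ∫⁻ x', Measure.pi (fun i => coupleKernel d μA μB (x' i)) t ∂γmeas :=
          lintegral_mono key
  -- density comparison
  have hddρ : ∀ᵐ x, dd' x ≤ ENNReal.ofReal (ρP x) :=
    aux_ae_le_of_withDensity_le hdd'm hρPm.ennreal_ofReal hddfin (by rw [← hρP]; exact hlow)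
  set dR : (Fin N → Fin d → ℝ) → ℝ := fun x => (dd' x).toReal with hdR
  have hdRm : Measurable dR := hdd'm.ennreal_toReal
  have hdR0 : ∀ x, 0 ≤ dR x := fun x => ENNReal.toReal_nonneg
  have hdRleγ : ∀ x, dR x ≤ γA x := fun x =>
    ENNReal.toReal_le_of_le_ofReal (hγA0 x) (hddle x)
  have hdRleρ : ∀ᵐ x, dR x ≤ ρP x :=
    hddρ.mono fun x hx => ENNReal.toReal_le_of_le_ofReal (hρP0 x) hx
  have hdRint : Integrable dR volume :=
    hγAint.mono' hdRm.aestronglyMeasurable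
      (Filter.Eventually.of_forall fun x => by
        rw [Real.norm_eq_abs, abs_of_nonneg (hdR0 x)]; exact hdRleγ x)
  have hddne : ∀ x, dd' x ≠ ∞ := fun x =>
    ne_top_of_le_ne_top ENNReal.ofReal_ne_top (hddle x)
  -- the key quantitative estimate
  set sA : ℝ := ∫ t, fA t with hsAdef
  have hsA0 : 0 ≤ sA := integral_nonneg hfA0
  have hterm : ∀ i : Fin N,
      ∫⁻ x, ENNReal.ofReal (γA x) * (1 - capA (x i)) = ENNReal.ofReal sA := by
    intro i
    have hgm : Measurable fun t : Fin d → ℝ => (1 : ℝ≥0∞) - capA t :=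
      measurable_const.sub hcapm
    calc ∫⁻ x, ENNReal.ofReal (γA x) * (1 - capA (x i))
        = ∫⁻ x, (1 - capA (x i)) ∂γmeas :=
          (lintegral_withDensity_eq_lintegral_mul volume hγAm.ennreal_ofReal
            (hgm.comp (measurable_pi_apply i))).symm
      _ = ∫⁻ t, (1 - capA t) ∂(γmeas.map (fun x => x i)) :=
          (lintegral_map hgm (measurable_pi_apply i)).symm
      _ = ∫⁻ t, (1 - capA t) ∂(volume.withDensity fun t => ENNReal.ofReal (μA t)) := by
          rw [hmarg i]
      _ = ∫⁻ t, ENNReal.ofReal (μA t) * (1 - capA t) :=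
          lintegral_withDensity_eq_lintegral_mul volume hμAm.ennreal_ofReal hgm
      _ = ∫⁻ t, ENNReal.ofReal (fA t) := by
          refine lintegral_congr_ae (hμA0.mono fun t ht => ?_)
          show ENNReal.ofReal (μA t) * (1 - capA t) = ENNReal.ofReal (fA t)
          have hmin0 : 0 ≤ min (μA t) (μB t) := le_min ht.le (hμB0 t)
          have hminA : min (μA t) (μB t) ≤ μA t := min_le_left _ _
          have ha0 : 0 ≤ a t := div_nonneg hmin0 ht.le
          have ha1 : a t ≤ 1 := (div_le_one ht).mpr hminA
          have hcap : capA t = ENNReal.ofReal (a t) :=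
            min_eq_left (ENNReal.ofReal_le_one.mpr ha1)
          rw [hcap, ← ENNReal.ofReal_one, ← ENNReal.ofReal_sub _ ha0,
            ← ENNReal.ofReal_mul ht.le]
          congr 1
          have hfAt : fA t = μA t - min (μA t) (μB t) := max_eq_left (sub_nonneg.mpr hminA)
          rw [hfAt, ha]
          field_simp
      _ = ENNReal.ofReal sA :=
          (ofReal_integral_eq_lintegral_ofReal hfA_int (Filter.Eventually.of_forall hfA0)).symm
  have hsum : ∫⁻ x, (ENNReal.ofReal (γA x) - dd' x) ≤ (N : ℝ≥0∞) * ENNReal.ofReal sA := by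
    have hpt : ∀ x, ENNReal.ofReal (γA x) - dd' x ≤
        ∑ i : Fin N, ENNReal.ofReal (γA x) * (1 - capA (x i)) := by
      intro x
      have h1 : ENNReal.ofReal (γA x) * (1 - ∏ i, capA (x i)) =
          ENNReal.ofReal (γA x) * 1 - ENNReal.ofReal (γA x) * ∏ i, capA (x i) :=
        ENNReal.mul_sub (fun _ _ => ENNReal.ofReal_ne_top)
      calc ENNReal.ofReal (γA x) - dd' x
          = ENNReal.ofReal (γA x) * (1 - ∏ i, capA (x i)) := by
            rw [h1, mul_one]
        _ ≤ ENNReal.ofReal (γA x) * ∑ i : Fin N, (1 - capA (x i)) :=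
            mul_le_mul_right (aux_one_sub_prod_le _ _ fun i _ => hcap1 _) _
        _ = ∑ i : Fin N, ENNReal.ofReal (γA x) * (1 - capA (x i)) := Finset.mul_sum _ _ _
    calc ∫⁻ x, (ENNReal.ofReal (γA x) - dd' x)
        ≤ ∫⁻ x, ∑ i : Fin N, ENNReal.ofReal (γA x) * (1 - capA (x i)) := lintegral_mono hpt
      _ = ∑ i : Fin N, ∫⁻ x, ENNReal.ofReal (γA x) * (1 - capA (x i)) :=
          lintegral_finset_sum _ fun i _ =>
            hγAm.ennreal_ofReal.mul ((measurable_const.sub hcapm).comp (measurable_pi_apply i))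
      _ = ∑ _i : Fin N, ENNReal.ofReal sA := Finset.sum_congr rfl fun i _ => hterm i
      _ = (N : ℝ≥0∞) * ENNReal.ofReal sA := by
          rw [Finset.sum_const, Finset.card_univ, Fintype.card_fin, nsmul_eq_mul]
  have hIsub : ∫ x, (γA x - dR x) ≤ (N : ℝ) * sA := by
    have heq : ∀ x, ENNReal.ofReal (γA x - dR x) = ENNReal.ofReal (γA x) - dd' x := by
      intro x
      rw [ENNReal.ofReal_sub _ (hdR0 x), ENNReal.ofReal_toReal (hddne x)]
    rw [integral_eq_lintegral_of_nonneg_ae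
      (Filter.Eventually.of_forall fun x => sub_nonneg.mpr (hdRleγ x))
      (hγAm.sub hdRm).aestronglyMeasurable]
    calc (∫⁻ x, ENNReal.ofReal (γA x - dR x)).toReal
        = (∫⁻ x, (ENNReal.ofReal (γA x) - dd' x)).toReal := by simp_rw [heq]
      _ ≤ ((N : ℝ≥0∞) * ENNReal.ofReal sA).toReal :=
          ENNReal.toReal_mono
            (ENNReal.mul_ne_top (ENNReal.natCast_ne_top N) ENNReal.ofReal_ne_top) hsum
      _ = (N : ℝ) * sA := by
          rw [ENNReal.toReal_mul, ENNReal.toReal_natCast, ENNReal.toReal_ofReal hsA0]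
  have hIγd : ∫ x, (γA x - dR x) = 1 - ∫ x, dR x := by
    rw [integral_sub hγAint hdRint, hγA1]
  have hIρd : ∫ x, (ρP x - dR x) = (∫ x, ρP x) - ∫ x, dR x := integral_sub hρPint hdRint
  have habs : ∀ᵐ x, |γA x - ρP x| ≤ (γA x - dR x) + (ρP x - dR x) :=
    hdRleρ.mono fun x hx => by
      have h1 := hdRleγ x
      rw [abs_sub_le_iff]
      constructor <;> linarith
  have hmain : ∫ x, |γA x - ρP x| ≤ 2 * ((N : ℝ) * sA) := by
    calc ∫ x, |γA x - ρP x|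
        ≤ ∫ x, ((γA x - dR x) + (ρP x - dR x)) :=
          integral_mono_ae (hγAint.sub hρPint).abs
            ((hγAint.sub hdRint).add (hρPint.sub hdRint)) habs
      _ = (∫ x, (γA x - dR x)) + ∫ x, (ρP x - dR x) :=
          integral_add (hγAint.sub hdRint) (hρPint.sub hdRint)
      _ = (1 - ∫ x, dR x) + ((∫ x, ρP x) - ∫ x, dR x) := by rw [hIγd, hIρd]
      _ ≤ (1 - ∫ x, dR x) + (1 - ∫ x, dR x) := by linarith [hρP1]
      _ = 2 * (1 - ∫ x, dR x) := by ring
      _ = 2 * ∫ x, (γA x - dR x) := by rw [hIγd]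
      _ ≤ 2 * ((N : ℝ) * sA) := by linarith [hIsub]
  -- identify 2 sA with the L¹ distance
  have hfAfB : ∀ t, fA t + fB t = |μA t - μB t| := by
    intro t
    rcases le_total (μA t) (μB t) with h | h
    · have h1 : fA t = 0 := by simp [hfA, min_eq_left h]
      have h2 : fB t = μB t - μA t := by
        simp only [hfB, min_eq_left h]
        exact max_eq_left (sub_nonneg.mpr h)
      rw [h1, h2, abs_of_nonpos (sub_nonpos.mpr h)]; ring
    · have h1 : fA t = μA t - μB t := by
        simp only [hfA, min_eq_right h]
        exact max_eq_left (sub_nonneg.mpr h)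
      have h2 : fB t = 0 := by simp [hfB, min_eq_right h]
      rw [h1, h2, abs_of_nonneg (sub_nonneg.mpr h)]; ring
  have hfAsubfB : ∀ t, fA t - fB t = μA t - μB t := by
    intro t
    rcases le_total (μA t) (μB t) with h | h
    · have h1 : fA t = 0 := by simp [hfA, min_eq_left h]
      have h2 : fB t = μB t - μA t := by
        simp only [hfB, min_eq_left h]
        exact max_eq_left (sub_nonneg.mpr h)
      rw [h1, h2]; ring
    · have h1 : fA t = μA t - μB t := by
        simp only [hfA, min_eq_right h]
        exact max_eq_left (sub_nonneg.mpr h)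
      have h2 : fB t = 0 := by simp [hfB, min_eq_right h]
      rw [h1, h2]; ring
  have hsAB : sA = s₀ := by
    have h1 : ∫ t, (fA t - fB t) = 0 := by
      calc ∫ t, (fA t - fB t) = ∫ t, (μA t - μB t) :=
            integral_congr_ae (Filter.Eventually.of_forall fun t => hfAsubfB t)
        _ = 0 := by rw [integral_sub hμAint hμBint, hμA1, hμB1]; ring
    have h2 : ∫ t, (fA t - fB t) = sA - s₀ := integral_sub hfA_int hfB_int
    linarith
  have h2sA : 2 * sA = ∫ t, |μA t - μB t| := by
    have h3 : ∫ t, (fA t + fB t) = ∫ t, |μA t - μB t| :=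
      integral_congr_ae (Filter.Eventually.of_forall fun t => hfAfB t)
    rw [integral_add hfA_int hfB_int] at h3
    rw [← hsAdef, ← hs₀def] at h3
    linarith
  have habs0 : 0 ≤ ∫ t, |μA t - μB t| := integral_nonneg fun t => abs_nonneg _
  have hconst : (N : ℝ) ≤ 2 ^ (N - 1) + ((N : ℝ) - 1) / 2 := by
    obtain ⟨n, rfl⟩ : ∃ n, N = n + 1 := ⟨N - 1, (Nat.succ_pred_eq_of_pos hN).symm⟩
    have h2 : ((n : ℝ) + 1) ≤ 2 ^ n := by
      have := Nat.lt_two_pow_self (n := n)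
      exact_mod_cast Nat.succ_le_of_lt this
    rw [Nat.add_sub_cancel]
    push_cast
    have hn : (0 : ℝ) ≤ (n : ℝ) := Nat.cast_nonneg n
    linarith
  calc ∫ x, |γA x - ρP x| ≤ 2 * ((N : ℝ) * sA) := hmain
    _ = (N : ℝ) * (2 * sA) := by ring
    _ = (N : ℝ) * ∫ t, |μA t - μB t| := by rw [h2sA]
    _ ≤ (2 ^ (N - 1) + ((N : ℝ) - 1) / 2) * ∫ t, |μA t - μB t| :=
        mul_le_mul_of_nonneg_right hconst habs0
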